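/- The group Alt(X) of even finitary permutations of an infinite set X is simple. -/

import Mathlib

open scoped Classical

/-- The set of 3-cycles of a type `X`, written as products of two transpositions. -/
def threeCycles (X : Type) : Set (Equiv.Perm X) :=
  {σ | ∃ a b c : X, a ≠ b ∧ a ≠ c ∧ b ≠ c ∧ σ = Equiv.swap a b * Equiv.swap a c}

/-- `Alt(X)`: the group of even finitary permutations of `X`, realized as the
subgroup of `Equiv.Perm X` generated by all 3-cycles. -/
def altGroup (X : Type) : Subgroup (Equiv.Perm X) :=
  Subgroup.closure (threeCycles X)

lemma conj_threeCycles {X : Type} (π : Equiv.Perm X) :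
    (MulAut.conj π).toMonoidHom '' threeCycles X ⊆ threeCycles X := by
  rintro _ ⟨σ, ⟨a, b, c, hab, hac, hbc, rfl⟩, rfl⟩
  refine ⟨π a, π b, π c, π.injective.ne hab, π.injective.ne hac, π.injective.ne hbc, ?_⟩
  simp only [MulEquiv.coe_toMonoidHom, MulAut.conj_apply]
  rw [Equiv.swap_apply_apply π a b, Equiv.swap_apply_apply π a c]
  group

lemma altGroup_map_conj_le {X : Type} (π : Equiv.Perm X) :
    (altGroup X).map (MulAut.conj π).toMonoidHom ≤ altGroup X := by
  rw [altGroup, MonoidHom.map_closure]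
  exact Subgroup.closure_mono (conj_threeCycles π)

lemma altGroup_map_conj {X : Type} (π : Equiv.Perm X) :
    (altGroup X).map (MulAut.conj π).toMonoidHom = altGroup X := by
  refine le_antisymm (altGroup_map_conj_le π) fun σ hσ => ?_
  refine ⟨(MulAut.conj π)⁻¹ σ, ?_, by simp; group⟩
  exact altGroup_map_conj_le π⁻¹ ⟨σ, hσ, by simp⟩

/-- Conjugation of `Alt(Γ)` by the left translation `x ↦ g x`. -/
def altConjAut (Γ : Type) [Group Γ] (g : Γ) : MulAut (altGroup Γ) :=
  ((MulAut.conj (Equiv.mulLeft g : Equiv.Perm Γ)).subgroupMap (altGroup Γ)).trans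
    (MulEquiv.subgroupCongr (altGroup_map_conj _))

/-- The action of `Γ` on `Alt(Γ)` given by `(g·σ)(x) = g σ (g⁻¹ x)`. -/
def altAction (Γ : Type) [Group Γ] : Γ →* MulAut (altGroup Γ) :=
  MonoidHom.mk' (fun g => altConjAut Γ g) (by
    intro g h
    refine MulEquiv.ext fun σ => Subtype.ext ?_
    show MulAut.conj (Equiv.mulLeft (g * h)) (σ : Equiv.Perm Γ) =
      MulAut.conj (Equiv.mulLeft g) (MulAut.conj (Equiv.mulLeft h) (σ : Equiv.Perm Γ))
    rw [Equiv.mulLeft_mul, map_mul]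
    rfl)


lemma coe_swap_apply {X : Type} {s : Finset X} (u v z : {x // x ∈ s}) :
    ((Equiv.swap u v z : {x // x ∈ s}) : X) = Equiv.swap (u : X) (v : X) (z : X) := by
  simp only [Equiv.swap_apply_def, Subtype.ext_iff]
  split_ifs <;> simp_all

noncomputable def extHom {X : Type} (s : Finset X) : Equiv.Perm {x // x ∈ s} →* Equiv.Perm X :=
  Equiv.Perm.extendDomainHom (Equiv.refl {x // x ∈ s})

lemma extHom_swap {X : Type} (s : Finset X) (u v : {x // x ∈ s}) :
    extHom s (Equiv.swap u v) = Equiv.swap (u : X) (v : X) := by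
  ext x
  by_cases hx : x ∈ s
  · rw [show x = ((⟨x, hx⟩ : {x // x ∈ s}) : X) from rfl]
    rw [extHom, Equiv.Perm.extendDomainHom]
    simp only [MonoidHom.coe_mk, OneHom.coe_mk]
    rw [Equiv.Perm.extendDomain_apply_subtype _ _ hx]
    simp [coe_swap_apply]
  · rw [extHom, Equiv.Perm.extendDomainHom]
    simp only [MonoidHom.coe_mk, OneHom.coe_mk]
    rw [Equiv.Perm.extendDomain_apply_not_subtype _ _ hx]
    rw [Equiv.swap_apply_of_ne_of_ne (fun h : x = ↑u => hx (h ▸ u.2))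
      (fun h : x = ↑v => hx (h ▸ v.2))]

lemma swap_mul_swap_mem_altGroup {X : Type} {a b c : X} (hab : a ≠ b) (hac : a ≠ c)
    (hbc : b ≠ c) : Equiv.swap a b * Equiv.swap a c ∈ altGroup X :=
  Subgroup.subset_closure ⟨a, b, c, hab, hac, hbc, rfl⟩

lemma altGroup_finite_support {X : Type} {σ : Equiv.Perm X} (h : σ ∈ altGroup X) :
    {x | σ x ≠ x}.Finite := by
  induction h using Subgroup.closure_induction with
  | mem g hg =>
    obtain ⟨a, b, c, hab, hac, hbc, rfl⟩ := hg
    refine ((Set.finite_singleton c).insert b |>.insert a).subset ?_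
    intro x hx
    by_contra hmem
    simp only [Set.mem_insert_iff, Set.mem_singleton_iff, not_or] at hmem
    obtain ⟨h1, h2, h3⟩ := hmem
    exact hx (by rw [Equiv.Perm.mul_apply, Equiv.swap_apply_of_ne_of_ne h1 h3,
      Equiv.swap_apply_of_ne_of_ne h1 h2])
  | one => simp
  | mul f g _ _ hf hg =>
    refine (hf.union hg).subset fun x hx => ?_
    by_contra hmem
    simp only [Set.mem_union, Set.mem_setOf_eq, not_or, not_not] at hmem
    exact hx (by simp [Equiv.Perm.mul_apply, hmem.2, hmem.1])
  | inv f _ hf =>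
    refine hf.subset fun x hx => ?_
    simp only [Set.mem_setOf_eq] at hx ⊢
    intro hfx
    exact hx (by nth_rewrite 1 [← hfx]; exact f.symm_apply_apply x)

lemma isThreeCycle_decomp {α : Type*} [Fintype α] [DecidableEq α]
    {g : Equiv.Perm α} (h : g.IsThreeCycle) :
    ∃ a b c, a ≠ b ∧ a ≠ c ∧ b ≠ c ∧ g = Equiv.swap a b * Equiv.swap a c := by
  obtain ⟨a, ha, -⟩ := h.isCycle
  have h3a : (g ^ 3) a = a := by rw [← h.orderOf, pow_orderOf_eq_one]; rfl
  set b := g a with hb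
  set c := g b with hc
  have hgc : g c = a := by
    have h' : (g ^ 3) a = g c := by
      rw [hc, hb]; simp [pow_succ, Equiv.Perm.mul_apply]
    rw [← h', h3a]
  have hab : a ≠ b := fun e => ha e.symm
  have hbc : b ≠ c := fun e => hab (g.injective e)
  have hac : a ≠ c := fun e => hab (calc a = g c := hgc.symm
    _ = g a := by rw [← e]
    _ = b := hb.symm)
  have hsupp : g.support = {a, b, c} := by
    refine (Finset.eq_of_subset_of_card_le ?_ ?_).symm
    · intro x hx
      simp only [Finset.mem_insert, Finset.mem_singleton] at hx
      rcases hx with rfl | rfl | rfl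
      · exact Equiv.Perm.mem_support.2 ha
      · exact Equiv.Perm.mem_support.2 (fun e => hbc (hc.trans e).symm)
      · exact Equiv.Perm.mem_support.2 (fun e => hac (hgc.symm.trans e))
    · rw [h.card_support, Finset.card_insert_of_notMem (by simp [hab, hac]),
        Finset.card_insert_of_notMem (by simp [hbc]), Finset.card_singleton]
  refine ⟨a, c, b, hac, hab, hbc.symm, ?_⟩
  ext x
  by_cases hxs : x ∈ g.support
  · rw [hsupp] at hxs
    simp only [Finset.mem_insert, Finset.mem_singleton] at hxs
    rcases hxs with rfl | rfl | rfl
    · rw [Equiv.Perm.mul_apply, Equiv.swap_apply_left,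
        Equiv.swap_apply_of_ne_of_ne hab.symm hbc]
    · rw [Equiv.Perm.mul_apply, Equiv.swap_apply_right, Equiv.swap_apply_left]
    · rw [Equiv.Perm.mul_apply, Equiv.swap_apply_of_ne_of_ne hac.symm hbc.symm,
        Equiv.swap_apply_right]
      exact hgc
  · have hxa : x ≠ a := fun e => hxs (by rw [hsupp, e]; simp)
    have hxb : x ≠ b := fun e => hxs (by rw [hsupp, e]; simp)
    have hxc : x ≠ c := fun e => hxs (by rw [hsupp, e]; simp)
    rw [Equiv.Perm.notMem_support.1 hxs, Equiv.Perm.mul_apply,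
      Equiv.swap_apply_of_ne_of_ne hxa hxb, Equiv.swap_apply_of_ne_of_ne hxa hxc]

lemma extHom_mem_altGroup {X : Type} (s : Finset X) {g : Equiv.Perm {x // x ∈ s}}
    (hg : g ∈ alternatingGroup {x // x ∈ s}) : extHom s g ∈ altGroup X := by
  rw [← Equiv.Perm.closure_three_cycles_eq_alternating] at hg
  induction hg using Subgroup.closure_induction with
  | mem g hg =>
    obtain ⟨a, b, c, hab, hac, hbc, rfl⟩ := isThreeCycle_decomp hg
    rw [map_mul, extHom_swap, extHom_swap]
    exact swap_mul_swap_mem_altGroup (Subtype.coe_injective.ne hab)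
      (Subtype.coe_injective.ne hac) (Subtype.coe_injective.ne hbc)
  | one => rw [map_one]; exact one_mem _
  | mul f g _ _ hf hg => rw [map_mul]; exact mul_mem hf hg
  | inv f _ hf => rw [map_inv]; exact inv_mem hf

noncomputable def altEmbed {X : Type} (s : Finset X) :
    alternatingGroup {x // x ∈ s} →* (altGroup X) :=
  MonoidHom.codRestrict ((extHom s).comp (alternatingGroup {x // x ∈ s}).subtype) _
    (fun g => extHom_mem_altGroup s g.2)

lemma altEmbed_coe {X : Type} (s : Finset X) (g : alternatingGroup {x // x ∈ s}) :
    (altEmbed s g : Equiv.Perm X) = extHom s g.1 := rfl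

def permCongrHom {α β : Type*} (e : α ≃ β) : Equiv.Perm α ≃* Equiv.Perm β :=
  { Equiv.permCongr e with map_mul' := fun p q => by ext x; simp [Equiv.permCongr_apply] }

lemma altS_simple {X : Type} (s : Finset X) (h5 : s.card = 5) :
    IsSimpleGroup (alternatingGroup {x // x ∈ s}) := by
  have hcard : Fintype.card {x // x ∈ s} = 5 := by rw [Fintype.card_coe, h5]
  haveI : Nontrivial (alternatingGroup {x // x ∈ s}) :=
    alternatingGroup.nontrivial_of_three_le_card (by rw [Nat.card_eq_fintype_card, hcard]; norm_num)
  obtain ⟨e⟩ : Nonempty (Fin 5 ≃ {x // x ∈ s}) := by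
    rw [← Fintype.card_eq, Fintype.card_fin, hcard]
  refine IsSimpleGroup.isSimpleGroup_of_surjective (G := alternatingGroup (Fin 5))
    (MonoidHom.codRestrict ((permCongrHom e).toMonoidHom.comp
      (alternatingGroup (Fin 5)).subtype) _ (fun g => ?_)) (fun h => ?_)
  · exact Equiv.Perm.mem_alternatingGroup.2
      ((Equiv.Perm.sign_permCongr e g.1).trans (Equiv.Perm.mem_alternatingGroup.1 g.2))
  · refine ⟨⟨e.symm.permCongr h.1, Equiv.Perm.mem_alternatingGroup.2
      ((Equiv.Perm.sign_permCongr e.symm h.1).trans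
        (Equiv.Perm.mem_alternatingGroup.1 h.2))⟩, ?_⟩
    refine Subtype.ext ?_
    show (permCongrHom e) (e.symm.permCongr h.1) = h.1
    ext x
    simp [permCongrHom, Equiv.permCongr_apply]

lemma machine {X : Type} (N : Subgroup (altGroup X)) (hN : N.Normal)
    (s : Finset X) (h5 : s.card = 5) (σ₀ : Equiv.Perm {x // x ∈ s})
    (hσ₀ : σ₀ ∈ alternatingGroup {x // x ∈ s}) (hne : σ₀ ≠ 1)
    (hmem : (⟨extHom s σ₀, extHom_mem_altGroup s hσ₀⟩ : altGroup X) ∈ N)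
    {x y z : X} (hx : x ∈ s) (hy : y ∈ s) (hz : z ∈ s)
    (hxy : x ≠ y) (hxz : x ≠ z) (hyz : y ≠ z) :
    (⟨Equiv.swap x y * Equiv.swap x z,
      swap_mul_swap_mem_altGroup hxy hxz hyz⟩ : altGroup X) ∈ N := by
  haveI := altS_simple s h5
  set M := N.comap (altEmbed s) with hM
  have hMnormal : M.Normal := by
    constructor
    intro n hn g
    show altEmbed s (g * n * g⁻¹) ∈ N
    rw [map_mul, map_mul, map_inv]
    exact hN.conj_mem _ hn _
  have hMne : M ≠ ⊥ := by
    rw [Subgroup.ne_bot_iff_exists_ne_one]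
    refine ⟨⟨⟨σ₀, hσ₀⟩, hmem⟩, fun hcon => hne ?_⟩
    exact Subtype.ext_iff.1 (Subtype.ext_iff.1 hcon)
  have hMtop : M = ⊤ := hMnormal.eq_bot_or_eq_top.resolve_left hMne
  have hxy' : (⟨x, hx⟩ : {x // x ∈ s}) ≠ ⟨y, hy⟩ := fun h => hxy (congrArg Subtype.val h)
  have hxz' : (⟨x, hx⟩ : {x // x ∈ s}) ≠ ⟨z, hz⟩ := fun h => hxz (congrArg Subtype.val h)
  set τ : Equiv.Perm {x // x ∈ s} :=
    Equiv.swap ⟨x, hx⟩ ⟨y, hy⟩ * Equiv.swap ⟨x, hx⟩ ⟨z, hz⟩ with hτ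
  have hτmem : τ ∈ alternatingGroup {x // x ∈ s} := by
    rw [Equiv.Perm.mem_alternatingGroup, hτ, map_mul, Equiv.Perm.sign_swap hxy',
      Equiv.Perm.sign_swap hxz']
    exact Int.units_mul_self _
  have hNτ : altEmbed s ⟨τ, hτmem⟩ ∈ N := by
    have : (⟨τ, hτmem⟩ : alternatingGroup {x // x ∈ s}) ∈ M := hMtop ▸ Subgroup.mem_top _
    exact this
  have heq : (⟨Equiv.swap x y * Equiv.swap x z,
      swap_mul_swap_mem_altGroup hxy hxz hyz⟩ : altGroup X) = altEmbed s ⟨τ, hτmem⟩ := by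
    refine Subtype.ext ?_
    rw [altEmbed_coe]
    show Equiv.swap x y * Equiv.swap x z = extHom s τ
    rw [hτ, map_mul, extHom_swap, extHom_swap]
  rw [heq]
  exact hNτ

lemma card_quint_le {X : Type} (a b c d e : X) : ({a, b, c, d, e} : Finset X).card ≤ 5 := by
  have h1 := Finset.card_insert_le a ({b, c, d, e} : Finset X)
  have h2 := Finset.card_insert_le b ({c, d, e} : Finset X)
  have h3 := Finset.card_insert_le c ({d, e} : Finset X)
  have h4 := Finset.card_insert_le d ({e} : Finset X)
  have h5 : ({e} : Finset X).card = 1 := Finset.card_singleton e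
  omega

lemma swap_mul_swap_ne_one {X : Type} {u v w : X} (huv : u ≠ v) (huw : u ≠ w) (hvw : v ≠ w) :
    Equiv.swap u v * Equiv.swap u w ≠ 1 := by
  intro hcon
  have := congrArg (fun p : Equiv.Perm X => p u) hcon
  simp only [Equiv.Perm.mul_apply, Equiv.swap_apply_left, Equiv.Perm.one_apply] at this
  rw [Equiv.swap_apply_of_ne_of_ne huw.symm hvw.symm] at this
  exact huw this.symm

lemma hop {X : Type} [Infinite X] (N : Subgroup (altGroup X)) (hN : N.Normal)
    {u v w x y z : X} (huv : u ≠ v) (huw : u ≠ w) (hvw : v ≠ w)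
    (hxy : x ≠ y) (hxz : x ≠ z) (hyz : y ≠ z)
    (t : Finset X) (hu : u ∈ t) (hv : v ∈ t) (hw : w ∈ t)
    (hx : x ∈ t) (hy : y ∈ t) (hz : z ∈ t) (hcard : t.card ≤ 5)
    (hmem : (⟨Equiv.swap u v * Equiv.swap u w,
      swap_mul_swap_mem_altGroup huv huw hvw⟩ : altGroup X) ∈ N) :
    (⟨Equiv.swap x y * Equiv.swap x z,
      swap_mul_swap_mem_altGroup hxy hxz hyz⟩ : altGroup X) ∈ N := by
  obtain ⟨s, hts, hs5⟩ := Infinite.exists_superset_card_eq t 5 hcard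
  have huv' : (⟨u, hts hu⟩ : {x // x ∈ s}) ≠ ⟨v, hts hv⟩ := fun h => huv (congrArg Subtype.val h)
  have huw' : (⟨u, hts hu⟩ : {x // x ∈ s}) ≠ ⟨w, hts hw⟩ := fun h => huw (congrArg Subtype.val h)
  set σ₀ : Equiv.Perm {x // x ∈ s} :=
    Equiv.swap ⟨u, hts hu⟩ ⟨v, hts hv⟩ * Equiv.swap ⟨u, hts hu⟩ ⟨w, hts hw⟩ with hσ₀
  have hext : extHom s σ₀ = Equiv.swap u v * Equiv.swap u w := by
    rw [hσ₀, map_mul, extHom_swap, extHom_swap]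
  have hσ₀mem : σ₀ ∈ alternatingGroup {x // x ∈ s} := by
    rw [Equiv.Perm.mem_alternatingGroup, hσ₀, map_mul, Equiv.Perm.sign_swap huv',
      Equiv.Perm.sign_swap huw']
    exact Int.units_mul_self _
  have hσ₀ne : σ₀ ≠ 1 := by
    intro hcon
    apply swap_mul_swap_ne_one huv huw hvw
    rw [← hext, hcon, map_one]
  have hmem' : (⟨extHom s σ₀, extHom_mem_altGroup s hσ₀mem⟩ : altGroup X) ∈ N := by
    have heq : (⟨extHom s σ₀, extHom_mem_altGroup s hσ₀mem⟩ : altGroup X) =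
        ⟨Equiv.swap u v * Equiv.swap u w, swap_mul_swap_mem_altGroup huv huw hvw⟩ :=
      Subtype.ext hext
    rw [heq]; exact hmem
  exact machine N hN s hs5 σ₀ hσ₀mem hσ₀ne hmem' (hts hx) (hts hy) (hts hz) hxy hxz hyz

lemma card_quad_le {X : Type} (a b c d : X) : ({a, b, c, d} : Finset X).card ≤ 4 := by
  have h1 := Finset.card_insert_le a ({b, c, d} : Finset X)
  have h2 := Finset.card_insert_le b ({c, d} : Finset X)
  have h3 := Finset.card_insert_le c ({d} : Finset X)
  have h4 : ({d} : Finset X).card = 1 := Finset.card_singleton d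
  omega

theorem altGroup_isSimpleGroup_aux (X : Type) [Infinite X] :
    IsSimpleGroup (altGroup X) := by
  obtain ⟨a0⟩ : Nonempty X := inferInstance
  obtain ⟨b0, hb0⟩ := Infinite.exists_notMem_finset ({a0} : Finset X)
  obtain ⟨c0, hc0⟩ := Infinite.exists_notMem_finset ({a0, b0} : Finset X)
  simp only [Finset.mem_singleton, Finset.mem_insert, not_or] at hb0 hc0
  have hab0 : a0 ≠ b0 := fun h => hb0 h.symm
  have hac0 : a0 ≠ c0 := fun h => hc0.1 h.symm
  have hbc0 : b0 ≠ c0 := fun h => hc0.2 h.symm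
  haveI hnt : Nontrivial (altGroup X) :=
    ⟨⟨⟨Equiv.swap a0 b0 * Equiv.swap a0 c0, swap_mul_swap_mem_altGroup hab0 hac0 hbc0⟩, 1,
      fun hcon => swap_mul_swap_ne_one hab0 hac0 hbc0 (Subtype.ext_iff.1 hcon)⟩⟩
  constructor
  intro N hN
  by_cases hbot : N = ⊥
  · exact Or.inl hbot
  refine Or.inr ?_
  obtain ⟨σ, hσne⟩ := Subgroup.ne_bot_iff_exists_ne_one.1 hbot
  set σv : Equiv.Perm X := ((σ : altGroup X) : Equiv.Perm X) with hσvdef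
  have hσv_ne : σv ≠ 1 := fun h => hσne (Subtype.ext (Subtype.ext h))
  obtain ⟨a, ha⟩ : ∃ a, σv a ≠ a := by
    by_contra hcon
    push_neg at hcon
    exact hσv_ne (Equiv.ext hcon)
  set b := σv a with hbdef
  have hba : b ≠ a := ha
  have hfin := altGroup_finite_support (σ : altGroup X).2
  obtain ⟨c, hc⟩ := Infinite.exists_notMem_finset (hfin.toFinset ∪ {a, b})
  obtain ⟨d, hd⟩ := Infinite.exists_notMem_finset (insert c (hfin.toFinset ∪ {a, b}))
  simp only [Finset.mem_union, Finset.mem_insert, Finset.mem_singleton, not_or,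
    Set.Finite.mem_toFinset, Set.mem_setOf_eq, not_not] at hc hd
  obtain ⟨hcc, hca, hcb⟩ := hc
  obtain ⟨hdc, hdd, hda, hdb⟩ := hd
  have hac : a ≠ c := fun h => hca h.symm
  have had : a ≠ d := fun h => hda h.symm
  have hcd : c ≠ d := fun h => hdc h.symm
  set π : altGroup X := ⟨Equiv.swap a c * Equiv.swap a d,
    swap_mul_swap_mem_altGroup hac had hcd⟩ with hπdef
  set τ : altGroup X := (σ : altGroup X) * π * (σ : altGroup X)⁻¹ * π⁻¹ with hτdef
  have hτN : τ ∈ N := by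
    have h1 : π * (σ : altGroup X)⁻¹ * π⁻¹ ∈ N := hN.conj_mem _ (N.inv_mem σ.2) π
    have h2 : τ = (σ : altGroup X) * (π * (σ : altGroup X)⁻¹ * π⁻¹) := by
      rw [hτdef]; group
    rw [h2]
    exact N.mul_mem σ.2 h1
  have hconj : σv * (Equiv.swap a c * Equiv.swap a d) * σv⁻¹ =
      Equiv.swap b c * Equiv.swap b d := by
    have e1 : Equiv.swap b c = σv * Equiv.swap a c * σv⁻¹ := by
      rw [← Equiv.swap_apply_apply σv a c, hcc, ← hbdef]
    have e2 : Equiv.swap b d = σv * Equiv.swap a d * σv⁻¹ := by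
      rw [← Equiv.swap_apply_apply σv a d, hdd, ← hbdef]
    rw [e1, e2]; group
  have hτv : (τ : Equiv.Perm X) =
      (Equiv.swap b c * Equiv.swap b d) * (Equiv.swap a d * Equiv.swap a c) := by
    have hinv : (Equiv.swap a c * Equiv.swap a d)⁻¹ = Equiv.swap a d * Equiv.swap a c := by
      rw [mul_inv_rev, Equiv.swap_inv, Equiv.swap_inv]
    calc (τ : Equiv.Perm X)
        = σv * (Equiv.swap a c * Equiv.swap a d) * σv⁻¹ *
          (Equiv.swap a c * Equiv.swap a d)⁻¹ := rfl
      _ = (Equiv.swap b c * Equiv.swap b d) * (Equiv.swap a d * Equiv.swap a c) := by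
          rw [hconj, hinv]
  have hτva : (τ : Equiv.Perm X) a = b := by
    rw [hτv]
    simp only [Equiv.Perm.mul_apply]
    rw [Equiv.swap_apply_left, Equiv.swap_apply_of_ne_of_ne hca hcd,
      Equiv.swap_apply_of_ne_of_ne hcb hcd, Equiv.swap_apply_right]
  obtain ⟨s, hsub, hs5⟩ := Infinite.exists_superset_card_eq ({a, b, c, d} : Finset X) 5
    (le_trans (card_quad_le a b c d) (by norm_num))
  have haS : a ∈ s := hsub (by simp)
  have hbS : b ∈ s := hsub (by simp)
  have hcS : c ∈ s := hsub (by simp)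
  have hdS : d ∈ s := hsub (by simp)
  have hbc' : (⟨b, hbS⟩ : {x // x ∈ s}) ≠ ⟨c, hcS⟩ := fun h => hcb (congrArg Subtype.val h).symm
  have hbd' : (⟨b, hbS⟩ : {x // x ∈ s}) ≠ ⟨d, hdS⟩ := fun h => hdb (congrArg Subtype.val h).symm
  have had' : (⟨a, haS⟩ : {x // x ∈ s}) ≠ ⟨d, hdS⟩ := fun h => had (congrArg Subtype.val h)
  have hac' : (⟨a, haS⟩ : {x // x ∈ s}) ≠ ⟨c, hcS⟩ := fun h => hac (congrArg Subtype.val h)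
  set σ₀ : Equiv.Perm {x // x ∈ s} :=
    (Equiv.swap ⟨b, hbS⟩ ⟨c, hcS⟩ * Equiv.swap ⟨b, hbS⟩ ⟨d, hdS⟩) *
    (Equiv.swap ⟨a, haS⟩ ⟨d, hdS⟩ * Equiv.swap ⟨a, haS⟩ ⟨c, hcS⟩) with hσ₀def
  have hextσ₀ : extHom s σ₀ = (τ : Equiv.Perm X) := by
    rw [hσ₀def, map_mul, map_mul, map_mul, extHom_swap, extHom_swap, extHom_swap,
      extHom_swap, ← hτv]
  have hσ₀mem : σ₀ ∈ alternatingGroup {x // x ∈ s} := by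
    rw [Equiv.Perm.mem_alternatingGroup, hσ₀def, map_mul, map_mul, map_mul,
      Equiv.Perm.sign_swap hbc', Equiv.Perm.sign_swap hbd', Equiv.Perm.sign_swap had',
      Equiv.Perm.sign_swap hac']
    norm_num
  have hσ₀ne : σ₀ ≠ 1 := by
    intro hcon
    rw [hcon, map_one] at hextσ₀
    rw [← hextσ₀] at hτva
    exact hba hτva.symm
  have hmem' : (⟨extHom s σ₀, extHom_mem_altGroup s hσ₀mem⟩ : altGroup X) ∈ N := by
    have heq : (⟨extHom s σ₀, extHom_mem_altGroup s hσ₀mem⟩ : altGroup X) = τ :=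
      Subtype.ext hextσ₀
    rw [heq]; exact hτN
  have h0 : (⟨Equiv.swap a c * Equiv.swap a d,
      swap_mul_swap_mem_altGroup hac had hcd⟩ : altGroup X) ∈ N :=
    machine N hN s hs5 σ₀ hσ₀mem hσ₀ne hmem' haS hcS hdS hac had hcd
  have allTC : ∀ x y z (hxy : x ≠ y) (hxz : x ≠ z) (hyz : y ≠ z),
      (⟨Equiv.swap x y * Equiv.swap x z,
        swap_mul_swap_mem_altGroup hxy hxz hyz⟩ : altGroup X) ∈ N := by
    intro x y z hxy hxz hyz
    obtain ⟨q, hq⟩ := Infinite.exists_notMem_finset ({a, c, d, x, y, z} : Finset X)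
    obtain ⟨r, hr⟩ := Infinite.exists_notMem_finset
      (insert q ({a, c, d, x, y, z} : Finset X))
    simp only [Finset.mem_insert, Finset.mem_singleton, not_or] at hq hr
    obtain ⟨hqa, hqc, hqd, hqx, hqy, hqz⟩ := hq
    obtain ⟨hrq, hra, hrc, hrd, hrx, hry, hrz⟩ := hr
    have haq : a ≠ q := fun h => hqa h.symm
    have har : a ≠ r := fun h => hra h.symm
    have hqr : q ≠ r := fun h => hrq h.symm
    have hxq : x ≠ q := fun h => hqx h.symm
    have hxr : x ≠ r := fun h => hrx h.symm
    have hyr : y ≠ r := fun h => hry h.symm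
    have hzr : z ≠ r := fun h => hrz h.symm
    have h1 := hop N hN hac had hcd haq har hqr ({a, c, d, q, r} : Finset X)
      (by simp) (by simp) (by simp) (by simp) (by simp) (by simp)
      (card_quint_le a c d q r) h0
    have h2 := hop N hN haq har hqr hxq hxr hqr ({a, q, r, x} : Finset X)
      (by simp) (by simp) (by simp) (by simp) (by simp) (by simp)
      (le_trans (card_quad_le a q r x) (by norm_num)) h1
    have h3 := hop N hN hxq hxr hqr hxy hxr hyr ({x, q, r, y} : Finset X)
      (by simp) (by simp) (by simp) (by simp) (by simp) (by simp)
      (le_trans (card_quad_le x q r y) (by norm_num)) h2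
    exact hop N hN hxy hxr hyr hxy hxz hyz ({x, y, r, z} : Finset X)
      (by simp) (by simp) (by simp) (by simp) (by simp) (by simp)
      (le_trans (card_quad_le x y r z) (by norm_num)) h3
  rw [Subgroup.eq_top_iff']
  intro g
  have hsub2 : threeCycles X ⊆ ↑(N.map (altGroup X).subtype) := by
    rintro _ ⟨x, y, z, hxy, hxz, hyz, rfl⟩
    exact SetLike.mem_coe.2 (Subgroup.mem_map.2
      ⟨⟨_, swap_mul_swap_mem_altGroup hxy hxz hyz⟩, allTC x y z hxy hxz hyz, rfl⟩)
  have hle : altGroup X ≤ N.map (altGroup X).subtype := (Subgroup.closure_le _).2 hsub2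
  obtain ⟨n, hnN, hn⟩ := Subgroup.mem_map.1 (hle g.2)
  rwa [← show n = g from Subtype.ext hn]

theorem altGroup_isSimpleGroup (X : Type) [Infinite X] :
    IsSimpleGroup (altGroup X) := altGroup_isSimpleGroup_aux X
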